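/- For the stacked-book graph G_{m,4} = S_m □ P_4 with m ≥ 2, the maximum induced matching number equals m. -/

import Mathlib

open SimpleGraph

/-- The star graph on `m` vertices: vertex `0` is the center, the rest are leaves. -/
def starGraph (m : ℕ) : SimpleGraph (Fin m) :=
  SimpleGraph.fromRel (fun i _ => i.val = 0)

/-- `M` is an induced matching of `G`: every element of `M` is an edge of `G`, and no two
distinct edges of `M` share an endpoint or have endpoints joined by an edge of `G`. -/
def IsInducedMatching {V : Type*} (G : SimpleGraph V) (M : Finset (Sym2 V)) : Prop :=
  ↑M ⊆ G.edgeSet ∧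
    ∀ e₁ ∈ M, ∀ e₂ ∈ M, e₁ ≠ e₂ → ∀ u ∈ e₁, ∀ v ∈ e₂, u ≠ v ∧ ¬G.Adj u v

/-- The maximum induced matching number of `G`. -/
noncomputable def im {V : Type*} (G : SimpleGraph V) : ℕ :=
  sSup {k | ∃ M : Finset (Sym2 V), IsInducedMatching G M ∧ M.card = k}

/-- The stacked-book graph `G_{m,n} = S_m □ P_n`. -/
def stackedBook (m n : ℕ) : SimpleGraph (Fin m × Fin n) :=
  starGraph m □ SimpleGraph.pathGraph n

lemma sb_adj {m : ℕ} {u v : Fin m × Fin 4} :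
    (stackedBook m 4).Adj u v ↔
      ((u.1.val = 0 ∨ v.1.val = 0) ∧ u.1.val ≠ v.1.val ∧ u.2.val = v.2.val) ∨
      ((u.2.val + 1 = v.2.val ∨ v.2.val + 1 = u.2.val) ∧ u.1.val = v.1.val) := by
  simp only [stackedBook, boxProd_adj, _root_.starGraph, fromRel_adj, pathGraph_adj,
    ne_eq, ← Fin.val_inj]
  tauto

lemma pair_ne_iff {m : ℕ} {u v : Fin m × Fin 4} :
    u ≠ v ↔ ¬(u.1.val = v.1.val ∧ u.2.val = v.2.val) := by
  simp [Prod.ext_iff, Fin.ext_iff]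

abbrev NCP {m : ℕ} (a b : Fin m × Fin 4) : Prop :=
  ¬(a.1.val = b.1.val ∧ a.2.val = b.2.val) ∧
  ¬(((a.1.val = 0 ∨ b.1.val = 0) ∧ a.1.val ≠ b.1.val ∧ a.2.val = b.2.val) ∨
    ((a.2.val + 1 = b.2.val ∨ b.2.val + 1 = a.2.val) ∧ a.1.val = b.1.val))

lemma ncp_of {m : ℕ} {a b : Fin m × Fin 4} (h1 : a ≠ b)
    (h2 : ¬ (stackedBook m 4).Adj a b) : NCP a b :=
  ⟨pair_ne_iff.mp h1, fun h => h2 (sb_adj.mpr h)⟩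

lemma compat_all {m : ℕ} {M : Finset (Sym2 (Fin m × Fin 4))}
    (hM : IsInducedMatching (stackedBook m 4) M)
    {e1 e2 : Sym2 (Fin m × Fin 4)} {u v x y : Fin m × Fin 4}
    (h1 : e1 ∈ M) (h2 : e2 ∈ M) (hne : e1 ≠ e2)
    (he1 : e1 = s(u,v)) (he2 : e2 = s(x,y)) :
    NCP u x ∧ NCP u y ∧ NCP v x ∧ NCP v y := by
  have C := hM.2 e1 h1 e2 h2 hne
  subst he1 he2
  have hu : u ∈ s(u,v) := Sym2.mem_mk_left u v
  have hv : v ∈ s(u,v) := Sym2.mem_mk_right u v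
  have hx : x ∈ s(x,y) := Sym2.mem_mk_left x y
  have hy : y ∈ s(x,y) := Sym2.mem_mk_right x y
  exact ⟨ncp_of (C u hu x hx).1 (C u hu x hx).2,
         ncp_of (C u hu y hy).1 (C u hu y hy).2,
         ncp_of (C v hv x hx).1 (C v hv x hx).2,
         ncp_of (C v hv y hy).1 (C v hv y hy).2⟩

def VertShape {m : ℕ} (e : Sym2 (Fin m × Fin 4)) : Prop :=
  ∃ (i : Fin m) (a b : Fin 4), a.val + 1 = b.val ∧ e = s((i,a),(i,b))

def HorShape {m : ℕ} (e : Sym2 (Fin m × Fin 4)) : Prop :=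
  ∃ (z k : Fin m) (j : Fin 4), z.val = 0 ∧ k.val ≠ 0 ∧ e = s((z,j),(k,j))

lemma shape {m : ℕ} {M : Finset (Sym2 (Fin m × Fin 4))}
    (hM : IsInducedMatching (stackedBook m 4) M) {e : Sym2 (Fin m × Fin 4)}
    (he : e ∈ M) : VertShape e ∨ HorShape e := by
  have hadj : e ∈ (stackedBook m 4).edgeSet := hM.1 he
  clear he
  induction e using Sym2.ind with
  | _ u v =>
    rw [SimpleGraph.mem_edgeSet, sb_adj] at hadj
    obtain ⟨i, a⟩ := u
    obtain ⟨i', a'⟩ := v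
    simp only at hadj
    rcases hadj with ⟨hz, hne, hcol⟩ | ⟨hpa, hrow⟩
    · right
      have hcol' : a = a' := Fin.ext hcol
      subst hcol'
      rcases hz with hz | hz
      · exact ⟨i, i', a, hz, by omega, rfl⟩
      · exact ⟨i', i, a, hz, by omega, Sym2.eq_swap⟩
    · left
      have hrow' : i = i' := Fin.ext hrow
      subst hrow'
      rcases hpa with hpa | hpa
      · exact ⟨i, a, a', hpa, rfl⟩
      · exact ⟨i, a', a, hpa, Sym2.eq_swap⟩

def rowFun {m : ℕ} : Sym2 (Fin m × Fin 4) → Fin m :=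
  Sym2.lift ⟨fun u v => max u.1 v.1, fun u v => max_comm u.1 v.1⟩

@[simp] lemma rowFun_mk {m : ℕ} (u v : Fin m × Fin 4) :
    rowFun s(u,v) = max u.1 v.1 := rfl

lemma rowFun_vert {m : ℕ} (i : Fin m) (a b : Fin 4) :
    rowFun s((i,a),(i,b)) = i := by simp

lemma rowFun_hor {m : ℕ} {z k : Fin m} (j : Fin 4) (hz : z.val = 0) :
    rowFun s((z,j),(k,j)) = k := by
  have : z ≤ k := by rw [Fin.le_def]; omega
  simp [max_eq_right this]

/-- Two distinct vertical edges of an induced matching lie in distinct rows. -/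
lemma vert_vert {m : ℕ} {M : Finset (Sym2 (Fin m × Fin 4))}
    (hM : IsInducedMatching (stackedBook m 4) M)
    {e1 e2 : Sym2 (Fin m × Fin 4)} (h1 : e1 ∈ M) (h2 : e2 ∈ M) (hne : e1 ≠ e2)
    (v1 : VertShape e1) (v2 : VertShape e2) : rowFun e1 ≠ rowFun e2 := by
  obtain ⟨i, a, b, hab, he1⟩ := v1
  obtain ⟨i', c, d, hcd, he2⟩ := v2
  obtain ⟨C1, C2, C3, C4⟩ := compat_all hM h1 h2 hne he1 he2
  rw [he1, he2, rowFun_vert, rowFun_vert]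
  intro h
  have hii : i.val = i'.val := by rw [h]
  simp only [NCP] at C1 C2 C3 C4
  have := a.isLt; have := b.isLt; have := c.isLt; have := d.isLt
  omega

/-- Columns of two distinct horizontal edges are at distance ≥ 2. -/
lemma hor_hor {m : ℕ} {M : Finset (Sym2 (Fin m × Fin 4))}
    (hM : IsInducedMatching (stackedBook m 4) M)
    {e1 e2 : Sym2 (Fin m × Fin 4)} (h1 : e1 ∈ M) (h2 : e2 ∈ M) (hne : e1 ≠ e2)
    {z k z' k' : Fin m} {j j' : Fin 4}
    (he1 : e1 = s((z,j),(k,j))) (he2 : e2 = s((z',j'),(k',j')))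
    (hz : z.val = 0) (hz' : z'.val = 0) :
    j.val + 2 ≤ j'.val ∨ j'.val + 2 ≤ j.val := by
  obtain ⟨C1, C2, C3, C4⟩ := compat_all hM h1 h2 hne he1 he2
  simp only [NCP] at C1 C2 C3 C4
  have := j.isLt; have := j'.isLt
  omega

/-- A vertical edge coexisting with two distinct horizontal edges avoids row 0 and row k1. -/
lemma vert_two_hor {m : ℕ} {M : Finset (Sym2 (Fin m × Fin 4))}
    (hM : IsInducedMatching (stackedBook m 4) M)
    {e e1 e2 : Sym2 (Fin m × Fin 4)} (he : e ∈ M) (h1 : e1 ∈ M) (h2 : e2 ∈ M)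
    (hne1 : e ≠ e1) (hne2 : e ≠ e2) (hne12 : e1 ≠ e2)
    {i : Fin m} {a b : Fin 4} (hee : e = s((i,a),(i,b))) (hab : a.val + 1 = b.val)
    {z k z' k' : Fin m} {j j' : Fin 4}
    (he1 : e1 = s((z,j),(k,j))) (he2 : e2 = s((z',j'),(k',j')))
    (hz : z.val = 0) (hk : k.val ≠ 0) (hz' : z'.val = 0) (hk' : k'.val ≠ 0) :
    i.val ≠ 0 ∧ i.val ≠ k.val := by
  have hfar := hor_hor hM h1 h2 hne12 he1 he2 hz hz'
  obtain ⟨C1, C2, C3, C4⟩ := compat_all hM he h1 hne1 hee he1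
  obtain ⟨D1, -, D3, -⟩ := compat_all hM he h2 hne2 hee he2
  simp only [NCP] at C1 C2 C3 C4 D1 D3
  have ha := a.isLt; have hb := b.isLt; have hj := j.isLt; have hj' := j'.isLt
  constructor
  · intro h
    clear C2 C4
    omega
  · intro h
    clear C1 C3
    omega

/-- With one horizontal edge present, if some vertical edge is in row 0 then every
vertical edge is in row 0. -/
lemma vert_one_hor {m : ℕ} {M : Finset (Sym2 (Fin m × Fin 4))}
    (hM : IsInducedMatching (stackedBook m 4) M)
    {e e0 e1 : Sym2 (Fin m × Fin 4)} (he : e ∈ M) (h0 : e0 ∈ M) (h1 : e1 ∈ M)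
    (hne0 : e ≠ e0) (hne1 : e ≠ e1) (hne01 : e0 ≠ e1)
    {i : Fin m} {a b : Fin 4} (hee : e = s((i,a),(i,b))) (hab : a.val + 1 = b.val)
    {i0 : Fin m} {a0 b0 : Fin 4} (hee0 : e0 = s((i0,a0),(i0,b0)))
    (hab0 : a0.val + 1 = b0.val) (hi0 : i0.val = 0)
    {z k : Fin m} {j : Fin 4} (he1 : e1 = s((z,j),(k,j)))
    (hz : z.val = 0) (hk : k.val ≠ 0) :
    i.val = 0 := by
  by_contra hi
  obtain ⟨C1, C2, C3, C4⟩ := compat_all hM he h0 hne0 hee hee0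
  obtain ⟨D1, -, D3, -⟩ := compat_all hM he h1 hne1 hee he1
  obtain ⟨E1, -, E3, -⟩ := compat_all hM h0 h1 hne01 hee0 he1
  simp only [NCP] at C1 C2 C3 C4 D1 D3 E1 E3
  have ha := a.isLt; have hb := b.isLt; have ha0 := a0.isLt
  have hb0 := b0.isLt; have hj := j.isLt
  have hE : (j.val = 0 ∧ a0.val = 2) ∨ (j.val = 3 ∧ a0.val = 0) := by
    clear C1 C2 C3 C4 D1 D3; omega
  have f1 : a.val ≠ a0.val := by clear C2 C3 C4 D1 D3 E1 E3; omega
  have f2 : a.val ≠ b0.val := by clear C1 C3 C4 D1 D3 E1 E3; omega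
  have f3 : b.val ≠ a0.val := by clear C1 C2 C4 D1 D3 E1 E3; omega
  have f4 : b.val ≠ b0.val := by clear C1 C2 C3 D1 D3 E1 E3; omega
  have g1 : a.val ≠ j.val := by clear C1 C2 C3 C4 D3 E1 E3; omega
  have g3 : b.val ≠ j.val := by clear C1 C2 C3 C4 D1 E1 E3; omega
  clear C1 C2 C3 C4 D1 D3 E1 E3
  omega

lemma upper {m : ℕ} (hm : 2 ≤ m) {M : Finset (Sym2 (Fin m × Fin 4))}
    (hM : IsInducedMatching (stackedBook m 4) M) : M.card ≤ m := by
  classical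
  set Vt := M.filter (fun e => VertShape e) with hVtdef
  set H := M.filter (fun e => ¬ VertShape e) with hHdef
  have hcard : Vt.card + H.card = M.card :=
    Finset.card_filter_add_card_filter_not _
  have hVtM : ∀ e ∈ Vt, e ∈ M := fun e he => (Finset.mem_filter.mp he).1
  have hVtS : ∀ e ∈ Vt, VertShape e := fun e he => (Finset.mem_filter.mp he).2
  have hHM : ∀ e ∈ H, e ∈ M := fun e he => (Finset.mem_filter.mp he).1
  have hHnotV : ∀ e ∈ H, ¬ VertShape e := fun e he => (Finset.mem_filter.mp he).2
  have hHS : ∀ e ∈ H, HorShape e := fun e he =>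
    (shape hM (hHM e he)).resolve_left (hHnotV e he)
  have hneVH : ∀ e ∈ Vt, ∀ e' ∈ H, e ≠ e' := by
    intro e he e' he' h
    exact hHnotV e' he' (h ▸ hVtS e he)
  set R := Vt.image rowFun with hRdef
  have hRcard : R.card = Vt.card := by
    apply Finset.card_image_of_injOn
    intro e1 h1 e2 h2 heq
    by_contra hne
    exact vert_vert hM (hVtM e1 h1) (hVtM e2 h2) hne (hVtS e1 h1) (hVtS e2 h2) heq
  have hH2 : H.card ≤ 2 := by
    by_contra hcon
    have h2lt : 2 < H.card := by omega
    obtain ⟨x, y, z, hx, hy, hz, hxy, hxz, hyz⟩ := Finset.two_lt_card_iff.mp h2lt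
    obtain ⟨z1, k1, j1, hz1, hk1, hx'⟩ := hHS x hx
    obtain ⟨z2, k2, j2, hz2, hk2, hy'⟩ := hHS y hy
    obtain ⟨z3, k3, j3, hz3, hk3, hz'⟩ := hHS z hz
    have f1 := hor_hor hM (hHM x hx) (hHM y hy) hxy hx' hy' hz1 hz2
    have f2 := hor_hor hM (hHM x hx) (hHM z hz) hxz hx' hz' hz1 hz3
    have f3 := hor_hor hM (hHM y hy) (hHM z hz) hyz hy' hz' hz2 hz3
    have := j1.isLt; have := j2.isLt; have := j3.isLt
    omega
  have hmR : R.card ≤ m := by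
    have := Finset.card_le_univ R
    simpa using this
  have hm0 : 0 < m := by omega
  set i0 : Fin m := (⟨0, hm0⟩ : Fin m) with hi0def
  have hi0val : i0.val = 0 := rfl
  have hcases : H.card = 0 ∨ H.card = 1 ∨ H.card = 2 := by omega
  rcases hcases with h0 | h1 | h2
  · omega
  · -- one horizontal edge
    obtain ⟨x, hHx⟩ := Finset.card_eq_one.mp h1
    have hx : x ∈ H := by rw [hHx]; exact Finset.mem_singleton_self x
    obtain ⟨z1, k1, j1, hz1, hk1, hx'⟩ := hHS x hx
    by_cases h0R : ∃ e0 ∈ Vt, (rowFun e0).val = 0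
    · -- some vertical in row 0 ⇒ all verticals in row 0
      obtain ⟨e0, he0, hrow0⟩ := h0R
      have hRsub : R ⊆ {rowFun e0} := by
        intro r hr
        obtain ⟨e, he, hre⟩ := Finset.mem_image.mp hr
        rw [Finset.mem_singleton]
        by_cases hee0 : e = e0
        · rw [← hre, hee0]
        · obtain ⟨i, a, b, hab, he'⟩ := hVtS e he
          obtain ⟨ii0, a0, b0, hab0, he0'⟩ := hVtS e0 he0
          rw [he0', rowFun_vert] at hrow0
          have hiv : i.val = 0 := by
            refine vert_one_hor hM (hVtM e he) (hVtM e0 he0) (hHM x hx) hee0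
              (hneVH e he x hx) (hneVH e0 he0 x hx) he' hab he0' hab0 hrow0 hx' hz1 hk1
          rw [← hre, he', rowFun_vert, he0', rowFun_vert]
          exact Fin.ext (by omega)
      have : R.card ≤ 1 := le_trans (Finset.card_le_card hRsub) (by simp)
      omega
    · -- no vertical in row 0
      push_neg at h0R
      have hRsub : R ⊆ Finset.univ.erase i0 := by
        intro r hr
        obtain ⟨e, he, hre⟩ := Finset.mem_image.mp hr
        refine Finset.mem_erase.mpr ⟨?_, Finset.mem_univ _⟩
        intro hri0
        exact h0R e he (by rw [hre, hri0])
      have hc : (Finset.univ.erase i0).card = m - 1 := by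
        rw [Finset.card_erase_of_mem (Finset.mem_univ _), Finset.card_univ, Fintype.card_fin]
      have := Finset.card_le_card hRsub
      omega
  · -- two horizontal edges
    obtain ⟨x, y, hxy, hHxy⟩ := Finset.card_eq_two.mp h2
    have hx : x ∈ H := by rw [hHxy]; exact Finset.mem_insert_self x _
    have hy : y ∈ H := by rw [hHxy]; exact Finset.mem_insert_of_mem (Finset.mem_singleton_self y)
    obtain ⟨z1, k1, j1, hz1, hk1, hx'⟩ := hHS x hx
    obtain ⟨z2, k2, j2, hz2, hk2, hy'⟩ := hHS y hy
    have hRsub : R ⊆ (Finset.univ.erase i0).erase k1 := by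
      intro r hr
      obtain ⟨e, he, hre⟩ := Finset.mem_image.mp hr
      obtain ⟨i, a, b, hab, he'⟩ := hVtS e he
      have key := vert_two_hor hM (hVtM e he) (hHM x hx) (hHM y hy)
        (hneVH e he x hx) (hneVH e he y hy) hxy he' hab hx' hy' hz1 hk1 hz2 hk2
      rw [he', rowFun_vert] at hre
      refine Finset.mem_erase.mpr ⟨?_, Finset.mem_erase.mpr ⟨?_, Finset.mem_univ _⟩⟩
      · intro h; rw [← hre] at h; exact key.2 (by rw [h])
      · intro h; rw [← hre] at h
        apply key.1
        rw [h]
    have hk1i0 : k1 ≠ i0 := by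
      intro h
      exact hk1 (by rw [h])
    have hc : ((Finset.univ.erase i0).erase k1).card = m - 2 := by
      rw [Finset.card_erase_of_mem (Finset.mem_erase.mpr ⟨hk1i0, Finset.mem_univ _⟩),
        Finset.card_erase_of_mem (Finset.mem_univ _), Finset.card_univ, Fintype.card_fin]
      omega
    have := Finset.card_le_card hRsub
    omega

lemma lower {m : ℕ} (hm : 2 ≤ m) :
    ∃ M : Finset (Sym2 (Fin m × Fin 4)),
      IsInducedMatching (stackedBook m 4) M ∧ M.card = m := by
  classical
  have h0 : 0 < m := by omega
  have h1 : 1 < m := by omega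
  set z0 : Fin m := ⟨0, h0⟩ with hz0
  set o1 : Fin m := ⟨1, h1⟩ with ho1
  set c0 : Fin 4 := ⟨0, by omega⟩ with hc0
  set c1 : Fin 4 := ⟨1, by omega⟩ with hc1
  set c3 : Fin 4 := ⟨3, by omega⟩ with hc3
  set f : Fin m → Sym2 (Fin m × Fin 4) := fun i => s((i, c0), (i, c1)) with hf
  set estar : Sym2 (Fin m × Fin 4) := s((z0, c3), (o1, c3)) with hestar
  refine ⟨insert estar ((Finset.univ.erase z0).image f), ?_, ?_⟩
  · constructor
    · intro e he
      simp only [Finset.coe_insert, Set.mem_insert_iff, Finset.coe_image,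
        Set.mem_image, Finset.mem_coe, Finset.mem_erase] at he
      rcases he with rfl | ⟨i, ⟨hi, -⟩, rfl⟩
      · rw [SimpleGraph.mem_edgeSet, sb_adj]
        left
        refine ⟨Or.inl rfl, ?_, rfl⟩
        simp [hz0, ho1]
      · rw [SimpleGraph.mem_edgeSet, sb_adj]
        right
        exact ⟨Or.inl rfl, rfl⟩
    · intro e1 he1 e2 he2 hne u hu v hv
      simp only [Finset.mem_insert, Finset.mem_image, Finset.mem_erase] at he1 he2
      -- normalize memberships
      rcases he1 with rfl | ⟨i, ⟨hi, -⟩, rfl⟩ <;>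
        rcases he2 with rfl | ⟨i', ⟨hi', -⟩, rfl⟩
      · exact absurd rfl hne
      · -- estar vs f i'
        have hiv : i'.val ≠ 0 := fun h => hi' (Fin.ext h)
        rw [hestar, Sym2.mem_iff] at hu
        rw [hf, Sym2.mem_iff] at hv
        constructor
        · rw [pair_ne_iff]
          rcases hu with rfl | rfl <;> rcases hv with rfl | rfl <;> simp [hz0, ho1, hc0, hc1, hc3] <;> omega
        · rw [sb_adj]
          rcases hu with rfl | rfl <;> rcases hv with rfl | rfl <;> simp [hz0, ho1, hc0, hc1, hc3] <;> omega
      · -- f i vs estar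
        have hiv : i.val ≠ 0 := fun h => hi (Fin.ext h)
        rw [hf, Sym2.mem_iff] at hu
        rw [hestar, Sym2.mem_iff] at hv
        constructor
        · rw [pair_ne_iff]
          rcases hu with rfl | rfl <;> rcases hv with rfl | rfl <;> simp [hz0, ho1, hc0, hc1, hc3] <;> omega
        · rw [sb_adj]
          rcases hu with rfl | rfl <;> rcases hv with rfl | rfl <;> simp [hz0, ho1, hc0, hc1, hc3] <;> omega
      · -- f i vs f i'
        have hiv : i.val ≠ 0 := fun h => hi (Fin.ext h)
        have hiv' : i'.val ≠ 0 := fun h => hi' (Fin.ext h)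
        have hii : i.val ≠ i'.val := by
          intro h
          exact hne (by rw [Fin.ext h])
        rw [hf, Sym2.mem_iff] at hu hv
        constructor
        · rw [pair_ne_iff]
          rcases hu with rfl | rfl <;> rcases hv with rfl | rfl <;> simp <;> omega
        · rw [sb_adj]
          rcases hu with rfl | rfl <;> rcases hv with rfl | rfl <;> simp <;> omega
  · rw [Finset.card_insert_of_notMem, Finset.card_image_of_injective,
      Finset.card_erase_of_mem (Finset.mem_univ _), Finset.card_univ, Fintype.card_fin]
    · omega
    · intro a b hab
      have hmem : (a, c0) ∈ f b := hab ▸ Sym2.mem_mk_left _ _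
      rw [hf, Sym2.mem_iff] at hmem
      rcases hmem with h | h
      · exact (Prod.ext_iff.mp h).1
      · have h2 := congrArg (fun p : Fin m × Fin 4 => p.2.val) h
        simp only [hc0, hc1, hc3] at h2
        exact absurd h2 (by norm_num)
    · intro hmem
      obtain ⟨i, -, hfi⟩ := Finset.mem_image.mp hmem
      have hmem2 : ((z0, c3) : Fin m × Fin 4) ∈ f i := hfi ▸ Sym2.mem_mk_left _ _
      rw [hf, Sym2.mem_iff] at hmem2
      rcases hmem2 with h | h <;>
      · have h2 := congrArg (fun p : Fin m × Fin 4 => p.2.val) h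
        simp only [hc0, hc1, hc3] at h2
        exact absurd h2 (by norm_num)

theorem im_stackedBook_four (m : ℕ) (hm : 2 ≤ m) :
    im (stackedBook m 4) = m := by
  obtain ⟨M0, hM0, hcard0⟩ := lower hm
  have hub : m ∈ upperBounds {k | ∃ M : Finset (Sym2 (Fin m × Fin 4)),
      IsInducedMatching (stackedBook m 4) M ∧ M.card = k} := by
    rintro k ⟨M, hM, rfl⟩
    exact upper hm hM
  have hmem : m ∈ {k | ∃ M : Finset (Sym2 (Fin m × Fin 4)),
      IsInducedMatching (stackedBook m 4) M ∧ M.card = k} := ⟨M0, hM0, hcard0⟩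
  exact le_antisymm (csSup_le ⟨m, hmem⟩ hub) (le_csSup ⟨m, hub⟩ hmem)
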